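/- In type A2, the five two-dimensional cones generated by the compatible pairs (clusters) {−α₁,−α₂}, {−α₁,α₂}, {α₂,α₁+α₂}, {α₁+α₂,α₁}, {α₁,−α₂} form a complete simplicial fan in ℝ²: their interiors are pairwise disjoint and their union is all of ℝ². -/
import Mathlib


/-- The closed simplicial cone generated by `v` and `w`. -/
def cone2 (v w : ℝ × ℝ) : Set (ℝ × ℝ) :=
  {p | ∃ s t : ℝ, 0 ≤ s ∧ 0 ≤ t ∧ p = s • v + t • w}

/-- The interior of the simplicial cone generated by `v` and `w`. -/
def openCone2 (v w : ℝ × ℝ) : Set (ℝ × ℝ) :=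
  {p | ∃ s t : ℝ, 0 < s ∧ 0 < t ∧ p = s • v + t • w}

/-- The five clusters of type A₂ (with α₁ = (1,0), α₂ = (0,1)):
{−α₁,−α₂}, {−α₁,α₂}, {α₂,α₁+α₂}, {α₁+α₂,α₁}, {α₁,−α₂}. -/
def clustersA2 : Fin 5 → (ℝ × ℝ) × (ℝ × ℝ) :=
  ![((-1, 0), (0, -1)), ((-1, 0), (0, 1)), ((0, 1), (1, 1)),
    ((1, 1), (1, 0)), ((1, 0), (0, -1))]

lemma mem_cone2_iff (v w p : ℝ × ℝ) : p ∈ cone2 v w ↔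
    ∃ s t : ℝ, 0 ≤ s ∧ 0 ≤ t ∧ p.1 = s * v.1 + t * w.1 ∧ p.2 = s * v.2 + t * w.2 := by
  simp [cone2, Prod.ext_iff]

lemma mem_openCone2_iff (v w p : ℝ × ℝ) : p ∈ openCone2 v w ↔
    ∃ s t : ℝ, 0 < s ∧ 0 < t ∧ p.1 = s * v.1 + t * w.1 ∧ p.2 = s * v.2 + t * w.2 := by
  simp [openCone2, Prod.ext_iff]

lemma c0 (p : ℝ × ℝ) : p ∈ cone2 ((-1,0) : ℝ×ℝ) (0,-1) ↔ p.1 ≤ 0 ∧ p.2 ≤ 0 := by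
  rw [mem_cone2_iff]
  constructor
  · rintro ⟨s, t, hs, ht, h1, h2⟩; constructor <;> simp at h1 h2 <;> linarith
  · rintro ⟨h1, h2⟩; exact ⟨-p.1, -p.2, by linarith, by linarith, by ring, by ring⟩

lemma c1 (p : ℝ × ℝ) : p ∈ cone2 ((-1,0) : ℝ×ℝ) (0,1) ↔ p.1 ≤ 0 ∧ 0 ≤ p.2 := by
  rw [mem_cone2_iff]
  constructor
  · rintro ⟨s, t, hs, ht, h1, h2⟩; constructor <;> simp at h1 h2 <;> linarith
  · rintro ⟨h1, h2⟩; exact ⟨-p.1, p.2, by linarith, h2, by ring, by ring⟩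

lemma c2 (p : ℝ × ℝ) : p ∈ cone2 ((0,1) : ℝ×ℝ) (1,1) ↔ 0 ≤ p.1 ∧ p.1 ≤ p.2 := by
  rw [mem_cone2_iff]
  constructor
  · rintro ⟨s, t, hs, ht, h1, h2⟩; constructor <;> simp at h1 h2 <;> linarith
  · rintro ⟨h1, h2⟩; exact ⟨p.2 - p.1, p.1, by linarith, h1, by ring, by ring⟩

lemma c3 (p : ℝ × ℝ) : p ∈ cone2 ((1,1) : ℝ×ℝ) (1,0) ↔ 0 ≤ p.2 ∧ p.2 ≤ p.1 := by
  rw [mem_cone2_iff]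
  constructor
  · rintro ⟨s, t, hs, ht, h1, h2⟩; constructor <;> simp at h1 h2 <;> linarith
  · rintro ⟨h1, h2⟩; exact ⟨p.2, p.1 - p.2, h1, by linarith, by ring, by ring⟩

lemma c4 (p : ℝ × ℝ) : p ∈ cone2 ((1,0) : ℝ×ℝ) (0,-1) ↔ 0 ≤ p.1 ∧ p.2 ≤ 0 := by
  rw [mem_cone2_iff]
  constructor
  · rintro ⟨s, t, hs, ht, h1, h2⟩; constructor <;> simp at h1 h2 <;> linarith
  · rintro ⟨h1, h2⟩; exact ⟨p.1, -p.2, h1, by linarith, by ring, by ring⟩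

lemma o0 (p : ℝ × ℝ) : p ∈ openCone2 ((-1,0) : ℝ×ℝ) (0,-1) ↔ p.1 < 0 ∧ p.2 < 0 := by
  rw [mem_openCone2_iff]
  constructor
  · rintro ⟨s, t, hs, ht, h1, h2⟩; constructor <;> simp at h1 h2 <;> linarith
  · rintro ⟨h1, h2⟩; exact ⟨-p.1, -p.2, by linarith, by linarith, by ring, by ring⟩

lemma o1 (p : ℝ × ℝ) : p ∈ openCone2 ((-1,0) : ℝ×ℝ) (0,1) ↔ p.1 < 0 ∧ 0 < p.2 := by
  rw [mem_openCone2_iff]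
  constructor
  · rintro ⟨s, t, hs, ht, h1, h2⟩; constructor <;> simp at h1 h2 <;> linarith
  · rintro ⟨h1, h2⟩; exact ⟨-p.1, p.2, by linarith, h2, by ring, by ring⟩

lemma o2 (p : ℝ × ℝ) : p ∈ openCone2 ((0,1) : ℝ×ℝ) (1,1) ↔ 0 < p.1 ∧ p.1 < p.2 := by
  rw [mem_openCone2_iff]
  constructor
  · rintro ⟨s, t, hs, ht, h1, h2⟩; constructor <;> simp at h1 h2 <;> linarith
  · rintro ⟨h1, h2⟩; exact ⟨p.2 - p.1, p.1, by linarith, h1, by ring, by ring⟩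

lemma o3 (p : ℝ × ℝ) : p ∈ openCone2 ((1,1) : ℝ×ℝ) (1,0) ↔ 0 < p.2 ∧ p.2 < p.1 := by
  rw [mem_openCone2_iff]
  constructor
  · rintro ⟨s, t, hs, ht, h1, h2⟩; constructor <;> simp at h1 h2 <;> linarith
  · rintro ⟨h1, h2⟩; exact ⟨p.2, p.1 - p.2, h1, by linarith, by ring, by ring⟩

lemma o4 (p : ℝ × ℝ) : p ∈ openCone2 ((1,0) : ℝ×ℝ) (0,-1) ↔ 0 < p.1 ∧ p.2 < 0 := by
  rw [mem_openCone2_iff]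
  constructor
  · rintro ⟨s, t, hs, ht, h1, h2⟩; constructor <;> simp at h1 h2 <;> linarith
  · rintro ⟨h1, h2⟩; exact ⟨p.1, -p.2, h1, by linarith, by ring, by ring⟩

-- ray lemmas
lemma rayXneg (p : ℝ × ℝ) (h1 : p.1 ≤ 0) (h2 : p.2 = 0) :
    ∃ s : ℝ, 0 ≤ s ∧ p = s • ((-1,0) : ℝ×ℝ) :=
  ⟨-p.1, by linarith, by rw [Prod.ext_iff]; constructor <;> simp [h2]⟩

lemma rayXpos (p : ℝ × ℝ) (h1 : 0 ≤ p.1) (h2 : p.2 = 0) :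
    ∃ s : ℝ, 0 ≤ s ∧ p = s • ((1,0) : ℝ×ℝ) :=
  ⟨p.1, h1, by rw [Prod.ext_iff]; constructor <;> simp [h2]⟩

lemma rayYneg (p : ℝ × ℝ) (h1 : p.1 = 0) (h2 : p.2 ≤ 0) :
    ∃ s : ℝ, 0 ≤ s ∧ p = s • ((0,-1) : ℝ×ℝ) :=
  ⟨-p.2, by linarith, by rw [Prod.ext_iff]; constructor <;> simp [h1]⟩

lemma rayYpos (p : ℝ × ℝ) (h1 : p.1 = 0) (h2 : 0 ≤ p.2) :
    ∃ s : ℝ, 0 ≤ s ∧ p = s • ((0,1) : ℝ×ℝ) :=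
  ⟨p.2, h2, by rw [Prod.ext_iff]; constructor <;> simp [h1]⟩

lemma rayDiag (p : ℝ × ℝ) (h1 : 0 ≤ p.1) (h2 : p.1 = p.2) :
    ∃ s : ℝ, 0 ≤ s ∧ p = s • ((1,1) : ℝ×ℝ) :=
  ⟨p.1, h1, by rw [Prod.ext_iff]; constructor <;> simp [← h2]⟩

lemma rayZero (p : ℝ × ℝ) (h1 : p.1 = 0) (h2 : p.2 = 0) (v : ℝ × ℝ) :
    ∃ s : ℝ, 0 ≤ s ∧ p = s • v :=
  ⟨0, le_refl 0, by rw [Prod.ext_iff]; constructor <;> simp [h1, h2]⟩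

lemma pick1 (p v w : ℝ × ℝ) (h : ∃ s : ℝ, 0 ≤ s ∧ p = s • v) :
    ∃ s : ℝ, 0 ≤ s ∧ (p = s • v ∨ p = s • w) :=
  h.imp fun _ hs => ⟨hs.1, Or.inl hs.2⟩

lemma pick2 (p v w : ℝ × ℝ) (h : ∃ s : ℝ, 0 ≤ s ∧ p = s • w) :
    ∃ s : ℝ, 0 ≤ s ∧ (p = s • v ∨ p = s • w) :=
  h.imp fun _ hs => ⟨hs.1, Or.inr hs.2⟩


theorem stmt17 :
    -- the five cones cover ℝ²
    (∀ p : ℝ × ℝ, ∃ k : Fin 5, p ∈ cone2 (clustersA2 k).1 (clustersA2 k).2) ∧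
    -- their interiors are pairwise disjoint
    (∀ k l : Fin 5, k ≠ l → ∀ p : ℝ × ℝ,
      p ∈ openCone2 (clustersA2 k).1 (clustersA2 k).2 →
      p ∉ openCone2 (clustersA2 l).1 (clustersA2 l).2) ∧
    -- a point in two cones lies on a boundary ray of each
    (∀ k l : Fin 5, k ≠ l → ∀ p : ℝ × ℝ,
      p ∈ cone2 (clustersA2 k).1 (clustersA2 k).2 →
      p ∈ cone2 (clustersA2 l).1 (clustersA2 l).2 →
      (∃ s : ℝ, 0 ≤ s ∧ (p = s • (clustersA2 k).1 ∨ p = s • (clustersA2 k).2)) ∧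
      (∃ t : ℝ, 0 ≤ t ∧ (p = t • (clustersA2 l).1 ∨ p = t • (clustersA2 l).2))) := by
  refine ⟨?_, ?_, ?_⟩
  · intro p
    rcases le_or_gt p.1 0 with hx | hx
    · rcases le_or_gt p.2 0 with hy | hy
      · exact ⟨0, (c0 p).mpr ⟨hx, hy⟩⟩
      · exact ⟨1, (c1 p).mpr ⟨hx, le_of_lt hy⟩⟩
    · rcases le_or_gt p.2 0 with hy | hy
      · exact ⟨4, (c4 p).mpr ⟨le_of_lt hx, hy⟩⟩
      · rcases le_total p.1 p.2 with h | h
        · exact ⟨2, (c2 p).mpr ⟨le_of_lt hx, h⟩⟩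
        · exact ⟨3, (c3 p).mpr ⟨le_of_lt hy, h⟩⟩
  · intro k l hkl p h1 h2
    rw [mem_openCone2_iff] at h1 h2
    obtain ⟨s, t, hs, ht, e1, e2⟩ := h1
    obtain ⟨s', t', hs', ht', e1', e2'⟩ := h2
    fin_cases k <;> fin_cases l <;> simp_all [clustersA2] <;> linarith
  · intro k l hkl p h1 h2
    fin_cases k <;> fin_cases l
    · exact absurd rfl hkl
    · obtain ⟨hx, hy⟩ := (c0 p).mp h1
      obtain ⟨hx', hy'⟩ := (c1 p).mp h2
      have e : p.2 = 0 := by linarith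
      exact ⟨pick1 _ _ _ (rayXneg p (by linarith) e), pick1 _ _ _ (rayXneg p (by linarith) e)⟩
    · obtain ⟨hx, hy⟩ := (c0 p).mp h1
      obtain ⟨hx', hy'⟩ := (c2 p).mp h2
      have e1 : p.1 = 0 := by linarith
      have e2 : p.2 = 0 := by linarith
      exact ⟨pick1 _ _ _ (rayZero p e1 e2 _), pick1 _ _ _ (rayZero p e1 e2 _)⟩
    · obtain ⟨hx, hy⟩ := (c0 p).mp h1
      obtain ⟨hx', hy'⟩ := (c3 p).mp h2
      have e1 : p.1 = 0 := by linarith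
      have e2 : p.2 = 0 := by linarith
      exact ⟨pick1 _ _ _ (rayZero p e1 e2 _), pick1 _ _ _ (rayZero p e1 e2 _)⟩
    · obtain ⟨hx, hy⟩ := (c0 p).mp h1
      obtain ⟨hx', hy'⟩ := (c4 p).mp h2
      have e : p.1 = 0 := by linarith
      exact ⟨pick2 _ _ _ (rayYneg p e (by linarith)), pick2 _ _ _ (rayYneg p e (by linarith))⟩
    · obtain ⟨hx, hy⟩ := (c1 p).mp h1
      obtain ⟨hx', hy'⟩ := (c0 p).mp h2
      have e : p.2 = 0 := by linarith
      exact ⟨pick1 _ _ _ (rayXneg p (by linarith) e), pick1 _ _ _ (rayXneg p (by linarith) e)⟩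
    · exact absurd rfl hkl
    · obtain ⟨hx, hy⟩ := (c1 p).mp h1
      obtain ⟨hx', hy'⟩ := (c2 p).mp h2
      have e : p.1 = 0 := by linarith
      exact ⟨pick2 _ _ _ (rayYpos p e (by linarith)), pick1 _ _ _ (rayYpos p e (by linarith))⟩
    · obtain ⟨hx, hy⟩ := (c1 p).mp h1
      obtain ⟨hx', hy'⟩ := (c3 p).mp h2
      have e1 : p.1 = 0 := by linarith
      have e2 : p.2 = 0 := by linarith
      exact ⟨pick1 _ _ _ (rayZero p e1 e2 _), pick1 _ _ _ (rayZero p e1 e2 _)⟩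
    · obtain ⟨hx, hy⟩ := (c1 p).mp h1
      obtain ⟨hx', hy'⟩ := (c4 p).mp h2
      have e1 : p.1 = 0 := by linarith
      have e2 : p.2 = 0 := by linarith
      exact ⟨pick1 _ _ _ (rayZero p e1 e2 _), pick1 _ _ _ (rayZero p e1 e2 _)⟩
    · obtain ⟨hx, hy⟩ := (c2 p).mp h1
      obtain ⟨hx', hy'⟩ := (c0 p).mp h2
      have e1 : p.1 = 0 := by linarith
      have e2 : p.2 = 0 := by linarith
      exact ⟨pick1 _ _ _ (rayZero p e1 e2 _), pick1 _ _ _ (rayZero p e1 e2 _)⟩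
    · obtain ⟨hx, hy⟩ := (c2 p).mp h1
      obtain ⟨hx', hy'⟩ := (c1 p).mp h2
      have e : p.1 = 0 := by linarith
      exact ⟨pick1 _ _ _ (rayYpos p e (by linarith)), pick2 _ _ _ (rayYpos p e (by linarith))⟩
    · exact absurd rfl hkl
    · obtain ⟨hx, hy⟩ := (c2 p).mp h1
      obtain ⟨hx', hy'⟩ := (c3 p).mp h2
      have e : p.1 = p.2 := by linarith
      exact ⟨pick2 _ _ _ (rayDiag p (by linarith) e), pick1 _ _ _ (rayDiag p (by linarith) e)⟩
    · obtain ⟨hx, hy⟩ := (c2 p).mp h1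
      obtain ⟨hx', hy'⟩ := (c4 p).mp h2
      have e1 : p.1 = 0 := by linarith
      have e2 : p.2 = 0 := by linarith
      exact ⟨pick1 _ _ _ (rayZero p e1 e2 _), pick1 _ _ _ (rayZero p e1 e2 _)⟩
    · obtain ⟨hx, hy⟩ := (c3 p).mp h1
      obtain ⟨hx', hy'⟩ := (c0 p).mp h2
      have e1 : p.1 = 0 := by linarith
      have e2 : p.2 = 0 := by linarith
      exact ⟨pick1 _ _ _ (rayZero p e1 e2 _), pick1 _ _ _ (rayZero p e1 e2 _)⟩
    · obtain ⟨hx, hy⟩ := (c3 p).mp h1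
      obtain ⟨hx', hy'⟩ := (c1 p).mp h2
      have e1 : p.1 = 0 := by linarith
      have e2 : p.2 = 0 := by linarith
      exact ⟨pick1 _ _ _ (rayZero p e1 e2 _), pick1 _ _ _ (rayZero p e1 e2 _)⟩
    · obtain ⟨hx, hy⟩ := (c3 p).mp h1
      obtain ⟨hx', hy'⟩ := (c2 p).mp h2
      have e : p.1 = p.2 := by linarith
      exact ⟨pick1 _ _ _ (rayDiag p (by linarith) e), pick2 _ _ _ (rayDiag p (by linarith) e)⟩
    · exact absurd rfl hkl
    · obtain ⟨hx, hy⟩ := (c3 p).mp h1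
      obtain ⟨hx', hy'⟩ := (c4 p).mp h2
      have e : p.2 = 0 := by linarith
      exact ⟨pick2 _ _ _ (rayXpos p (by linarith) e), pick1 _ _ _ (rayXpos p (by linarith) e)⟩
    · obtain ⟨hx, hy⟩ := (c4 p).mp h1
      obtain ⟨hx', hy'⟩ := (c0 p).mp h2
      have e : p.1 = 0 := by linarith
      exact ⟨pick2 _ _ _ (rayYneg p e (by linarith)), pick2 _ _ _ (rayYneg p e (by linarith))⟩
    · obtain ⟨hx, hy⟩ := (c4 p).mp h1
      obtain ⟨hx', hy'⟩ := (c1 p).mp h2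
      have e1 : p.1 = 0 := by linarith
      have e2 : p.2 = 0 := by linarith
      exact ⟨pick1 _ _ _ (rayZero p e1 e2 _), pick1 _ _ _ (rayZero p e1 e2 _)⟩
    · obtain ⟨hx, hy⟩ := (c4 p).mp h1
      obtain ⟨hx', hy'⟩ := (c2 p).mp h2
      have e1 : p.1 = 0 := by linarith
      have e2 : p.2 = 0 := by linarith
      exact ⟨pick1 _ _ _ (rayZero p e1 e2 _), pick1 _ _ _ (rayZero p e1 e2 _)⟩
    · obtain ⟨hx, hy⟩ := (c4 p).mp h1
      obtain ⟨hx', hy'⟩ := (c3 p).mp h2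
      have e : p.2 = 0 := by linarith
      exact ⟨pick1 _ _ _ (rayXpos p (by linarith) e), pick2 _ _ _ (rayXpos p (by linarith) e)⟩
    · exact absurd rfl hkl
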